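/- Suppose f : [0,∞) → ℂ is continuously differentiable, w, λ ∈ ℂ with Re(w) > 0, Re(λ) > 0, α ∈ ℂ, and all integrals below converge absolutely. Then ∫₀^∞ e^{-w t} t^{λ-1} f(t) dt = f(α)·Γ(λ)/w^{λ} + (1/w)·∫₀^∞ e^{-w t} t^{λ-1} · f̃₁(t) dt, where f̃₁(t) = t·d/dt[ (f(t)-f(α))/(t-α) ], provided f̃₁ extends continuously across t = α, the boundary terms e^{-wt}t^{λ}(f(t)-f(α))/(t-α) vanish at t=0 and t=∞, and λ = α·w. -/

import Mathlib

open MeasureTheory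
open Set Filter Complex

lemma realBound_int {σ c : ℝ} (hσ : 0 < σ) (hc : 0 < c) :
    IntegrableOn (fun t : ℝ => Real.exp (-(c * t)) * t ^ (σ - 1)) (Ioi 0) := by
  have h0 := Real.GammaIntegral_convergent hσ
  have h1 : IntegrableOn (fun x : ℝ => Real.exp (-(c * x)) * (c * x) ^ (σ - 1)) (Ioi 0) := by
    have := (integrableOn_Ioi_comp_mul_left_iff
      (fun x : ℝ => Real.exp (-x) * x ^ (σ - 1)) 0 hc).mpr (by simpa using h0)
    simpa [mul_zero] using this
  have h2 : IntegrableOn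
      (fun x : ℝ => (c ^ (σ - 1))⁻¹ * (Real.exp (-(c * x)) * (c * x) ^ (σ - 1))) (Ioi 0) :=
    h1.const_mul _
  refine h2.congr_fun (fun x hx => ?_) measurableSet_Ioi
  rw [mem_Ioi] at hx
  simp only [Real.mul_rpow hc.le hx.le]
  have hne : c ^ (σ - 1) ≠ 0 := ne_of_gt (Real.rpow_pos_of_pos hc _)
  field_simp

lemma cexp_cpow_norm {s w : ℂ} {t : ℝ} (ht : 0 < t) :
    ‖Complex.exp (-w * t) * (t : ℂ) ^ (s - 1)‖
      = Real.exp (-(w.re * t)) * t ^ (s.re - 1) := by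
  rw [norm_mul, Complex.norm_exp,
    Complex.norm_cpow_eq_rpow_re_of_pos ht]
  simp [Complex.sub_re]

lemma contOn_integrand (s w : ℂ) :
    ContinuousOn (fun t : ℝ => Complex.exp (-w * t) * (t : ℂ) ^ (s - 1)) (Ioi 0) := by
  apply ContinuousOn.mul
  · exact (Complex.continuous_exp.comp (by continuity)).continuousOn
  · intro t ht
    exact ((Complex.continuousAt_ofReal_cpow_const t (s - 1)
      (Or.inr (by exact_mod_cast (mem_Ioi.mp ht).ne'))).continuousWithinAt)

lemma intOn_cexp_cpow (s w : ℂ) (hs : 0 < s.re) (hw : 0 < w.re) :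
    IntegrableOn (fun t : ℝ => Complex.exp (-w * t) * (t : ℂ) ^ (s - 1)) (Ioi 0) := by
  refine Integrable.mono' (realBound_int hs hw)
    ((contOn_integrand s w).aestronglyMeasurable measurableSet_Ioi) ?_
  filter_upwards [ae_restrict_mem measurableSet_Ioi] with t ht
  rw [cexp_cpow_norm (mem_Ioi.mp ht)]

lemma hasDerivAt_cexp_mul (w : ℂ) (t : ℝ) :
    HasDerivAt (fun t : ℝ => Complex.exp (-w * t)) (-w * Complex.exp (-w * t)) t := by
  have h0 : HasDerivAt (fun t : ℝ => (t : ℂ)) 1 t := by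
    simpa using (hasDerivAt_id t).ofReal_comp
  have h1 : HasDerivAt (fun t : ℝ => -w * (t : ℂ)) (-w) t := by
    simpa using h0.const_mul (-w)
  simpa [mul_comm] using h1.cexp

lemma hasDerivAt_real_cpow_c {s : ℂ} (hs : s ≠ 0) {t : ℝ} (ht : 0 < t) :
    HasDerivAt (fun t : ℝ => (t : ℂ) ^ s) (s * (t : ℂ) ^ (s - 1)) t := by
  have hr : s - 1 ≠ -1 := by
    intro h; apply hs; linear_combination h
  have h := (hasDerivAt_ofReal_cpow_const' ht.ne' hr).const_mul s
  have he : s - 1 + 1 = s := by ring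
  rw [he] at h
  have : (fun y : ℝ => s * ((y : ℂ) ^ s / s)) = fun y : ℝ => (y : ℂ) ^ s := by
    ext y; field_simp
  rw [this] at h
  simpa [mul_comm] using h

lemma hasDerivAt_u (s w : ℂ) (hs : s ≠ 0) {t : ℝ} (ht : 0 < t) :
    HasDerivAt (fun t : ℝ => Complex.exp (-w * t) * (t : ℂ) ^ s)
      (-w * (Complex.exp (-w * t) * (t : ℂ) ^ s)
        + s * (Complex.exp (-w * t) * (t : ℂ) ^ (s - 1))) t := by
  have h := (hasDerivAt_cexp_mul w t).mul (hasDerivAt_real_cpow_c hs ht)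
  exact h.congr_deriv (by ring)

lemma tendsto_u_top (s w : ℂ) (hw : 0 < w.re) :
    Filter.Tendsto (fun t : ℝ => Complex.exp (-w * t) * (t : ℂ) ^ s)
      Filter.atTop (nhds 0) := by
  apply squeeze_zero_norm' (a := fun t : ℝ => t ^ s.re * Real.exp (-w.re * t))
  · filter_upwards [eventually_gt_atTop (0 : ℝ)] with t ht
    have := cexp_cpow_norm (s := s + 1) (w := w) ht
    simp only [add_sub_cancel_right, Complex.add_re, Complex.one_re] at this
    rw [this]
    ring_nf
    exact le_refl _
  · exact tendsto_rpow_mul_exp_neg_mul_atTop_nhds_zero s.re w.re hw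

lemma tendsto_u_zero (s w : ℂ) (hs : 0 < s.re) (hw : 0 < w.re) :
    Filter.Tendsto (fun t : ℝ => Complex.exp (-w * t) * (t : ℂ) ^ s)
      (nhdsWithin 0 (Ici 0)) (nhds 0) := by
  apply squeeze_zero_norm' (a := fun t : ℝ => t ^ s.re)
  · filter_upwards [self_mem_nhdsWithin] with t (ht : (0:ℝ) ≤ t)
    rcases eq_or_lt_of_le ht with h | h
    · rw [← h]
      have h0 : s ≠ 0 := fun h0 => by simp [h0] at hs
      rw [Complex.ofReal_zero, Complex.zero_cpow h0, Real.zero_rpow hs.ne']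
      simp
    · have := cexp_cpow_norm (s := s + 1) (w := w) h
      simp only [add_sub_cancel_right, Complex.add_re, Complex.one_re] at this
      rw [this]
      calc Real.exp (-(w.re * t)) * t ^ s.re ≤ 1 * t ^ s.re := by
            apply mul_le_mul_of_nonneg_right _ (Real.rpow_nonneg ht _)
            exact Real.exp_le_one_iff.mpr (by nlinarith)
        _ = t ^ s.re := one_mul _
  · have h1 : ContinuousAt (fun t : ℝ => t ^ s.re) 0 :=
      (Real.continuousAt_rpow_const 0 s.re (Or.inr hs.le))
    have := (h1.continuousWithinAt (s := Ici 0)).tendsto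
    simpa [Real.zero_rpow hs.ne'] using this

lemma ibp_rel (s w : ℂ) (hs : 0 < s.re) (hw : 0 < w.re) :
    w * ∫ t in Ioi (0:ℝ), Complex.exp (-w * t) * (t : ℂ) ^ s
      = s * ∫ t in Ioi (0:ℝ), Complex.exp (-w * t) * (t : ℂ) ^ (s - 1) := by
  have hsne : s ≠ 0 := fun h0 => by simp [h0] at hs
  have hA : IntegrableOn (fun t : ℝ => Complex.exp (-w * t) * (t : ℂ) ^ s) (Ioi 0) := by
    have := intOn_cexp_cpow (s + 1) w (by simp [Complex.add_re]; positivity) hw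
    simpa using this
  have hB := intOn_cexp_cpow s w hs hw
  set u' : ℝ → ℂ := fun t => -w * (Complex.exp (-w * t) * (t : ℂ) ^ s)
    + s * (Complex.exp (-w * t) * (t : ℂ) ^ (s - 1)) with hu'
  have hint : IntegrableOn u' (Ioi 0) := (hA.const_mul (-w)).add (hB.const_mul s)
  have hcont : ContinuousWithinAt (fun t : ℝ => Complex.exp (-w * t) * (t : ℂ) ^ s)
      (Ici 0) 0 := by
    rw [ContinuousWithinAt]
    have h0 : Complex.exp (-w * (0:ℝ)) * ((0:ℝ) : ℂ) ^ s = 0 := by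
      rw [Complex.ofReal_zero, Complex.zero_cpow hsne, mul_zero]
    rw [h0]
    exact tendsto_u_zero s w hs hw
  have key := integral_Ioi_of_hasDerivAt_of_tendsto hcont
    (fun x hx => hasDerivAt_u s w hsne (mem_Ioi.mp hx)) hint (tendsto_u_top s w hw)
  rw [show ((0:ℝ):ℂ) = (0:ℂ) from Complex.ofReal_zero, Complex.zero_cpow hsne] at key
  simp only [mul_zero, one_mul, zero_sub, neg_zero, sub_zero] at key
  have hsplit : ∫ t in Ioi (0:ℝ), u' t
      = -w * (∫ t in Ioi (0:ℝ), Complex.exp (-w * t) * (t : ℂ) ^ s)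
        + s * ∫ t in Ioi (0:ℝ), Complex.exp (-w * t) * (t : ℂ) ^ (s - 1) := by
    rw [hu', integral_add (hA.const_mul (-w)) (hB.const_mul s),
      integral_const_mul, integral_const_mul]
  rw [key] at hsplit
  have := hsplit.symm
  linear_combination -this

lemma F_hasDerivAt (s : ℂ) (hs : 0 < s.re) {z : ℂ} (hz : 0 < z.re) :
    HasDerivAt (fun x : ℂ => ∫ t in Ioi (0:ℝ), Complex.exp (-x * t) * (t : ℂ) ^ (s - 1))
      (∫ t in Ioi (0:ℝ), Complex.exp (-z * t) * (-(t:ℂ)) * (t : ℂ) ^ (s - 1)) z := by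
  set μ := volume.restrict (Ioi (0:ℝ))
  set F : ℂ → ℝ → ℂ := fun x t => Complex.exp (-x * t) * (t : ℂ) ^ (s - 1) with hF
  set F' : ℂ → ℝ → ℂ := fun x t => Complex.exp (-x * t) * (-(t:ℂ)) * (t : ℂ) ^ (s - 1) with hF'
  have ε_pos : 0 < z.re / 2 := by positivity
  have hF_meas : ∀ᶠ x in nhds z, AEStronglyMeasurable (F x) μ :=
    Filter.Eventually.of_forall fun x =>
      ((contOn_integrand s x).aestronglyMeasurable measurableSet_Ioi)
  have hF_int : Integrable (F z) μ := intOn_cexp_cpow s z hs hz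
  have hF'_meas : AEStronglyMeasurable (F' z) μ := by
    apply ContinuousOn.aestronglyMeasurable _ measurableSet_Ioi
    apply ContinuousOn.mul _ (fun t ht =>
      (Complex.continuousAt_ofReal_cpow_const t (s - 1)
        (Or.inr (by exact_mod_cast (mem_Ioi.mp ht).ne'))).continuousWithinAt)
    exact (((Complex.continuous_exp.comp (by continuity)).mul
      (by continuity : Continuous fun t : ℝ => -(t:ℂ)))).continuousOn
  have h_bound : ∀ᵐ t ∂μ, ∀ x ∈ Metric.ball z (z.re / 2), ‖F' x t‖
      ≤ Real.exp (-(z.re / 2 * t)) * t ^ ((s.re + 1) - 1) := by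
    filter_upwards [ae_restrict_mem measurableSet_Ioi] with t ht x hx
    rw [mem_Ioi] at ht
    have hre : z.re / 2 ≤ x.re := by
      have h1 : |x.re - z.re| ≤ ‖x - z‖ := by
        simpa using Complex.abs_re_le_norm (x - z)
      rw [Metric.mem_ball, Complex.dist_eq] at hx
      have := abs_le.mp (h1.trans hx.le)
      linarith [this.1]
    have hnorm : ‖F' x t‖ = Real.exp (-(x.re * t)) * (t * t ^ (s.re - 1)) := by
      rw [hF']
      simp only [norm_mul, Complex.norm_exp,
        Complex.norm_cpow_eq_rpow_re_of_pos ht]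
      simp [Complex.sub_re, Complex.neg_re, Complex.mul_re, Complex.ofReal_re,
        Complex.ofReal_im, abs_of_pos ht]
      ring
    rw [hnorm]
    have ht1 : t * t ^ (s.re - 1) = t ^ (s.re + 1 - 1) := by
      rw [add_sub_cancel_right]
      nth_rewrite 1 [← Real.rpow_one t]
      rw [← Real.rpow_add ht]
      ring_nf
    rw [ht1]
    apply mul_le_mul_of_nonneg_right _ (Real.rpow_nonneg ht.le _)
    apply Real.exp_le_exp.mpr
    nlinarith
  have bound_int : Integrable (fun t : ℝ => Real.exp (-(z.re / 2 * t)) * t ^ ((s.re + 1) - 1)) μ :=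
    realBound_int (by positivity) ε_pos
  have h_diff : ∀ᵐ t ∂μ, ∀ x ∈ Metric.ball z (z.re / 2), HasDerivAt (fun x => F x t) (F' x t) x := by
    filter_upwards [ae_restrict_mem measurableSet_Ioi] with t ht x hx
    have h1 : HasDerivAt (fun x : ℂ => -x * t) (-(t:ℂ)) x := by
      simpa using ((hasDerivAt_id x).neg.mul_const ((t:ℝ):ℂ))
    exact ((h1.cexp).mul_const ((t:ℂ) ^ (s - 1)))
  exact (hasDerivAt_integral_of_dominated_loc_of_deriv_le (Metric.ball_mem_nhds z ε_pos) hF_meas hF_int hF'_meas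
    h_bound bound_int h_diff).2

lemma gammaIntegral_cexp (s w : ℂ) (hs : 0 < s.re) (hw : 0 < w.re) :
    ∫ t in Ioi (0:ℝ), Complex.exp (-w * t) * (t : ℂ) ^ (s - 1)
      = Complex.Gamma s / w ^ s := by
  set F : ℂ → ℂ := fun x => ∫ t in Ioi (0:ℝ), Complex.exp (-x * t) * (t : ℂ) ^ (s - 1) with hFdef
  set U : Set ℂ := {z : ℂ | 0 < z.re} with hU
  -- the function H z = F z * z ^ s has derivative zero on U
  have hderiv : ∀ z ∈ U, HasDerivAt (fun z => F z * z ^ s) 0 z := by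
    intro z hz
    have hz' : 0 < z.re := hz
    have hzne : z ≠ 0 := fun h => by simp [h] at hz'
    have h1 := F_hasDerivAt s hs hz'
    -- identify the derivative: ∫ cexp(-z t) * (-t) * t^(s-1) = -(s/z) * F z
    have h2 : (∫ t in Ioi (0:ℝ), Complex.exp (-z * t) * (-(t:ℂ)) * (t : ℂ) ^ (s - 1))
        = -((s / z) * F z) := by
      have e1 : ∀ t ∈ Ioi (0:ℝ), Complex.exp (-z * t) * (-(t:ℂ)) * (t : ℂ) ^ (s - 1)
          = -(Complex.exp (-z * t) * (t : ℂ) ^ s) := by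
        intro t ht
        rw [mem_Ioi] at ht
        have hne : (t:ℂ) ≠ 0 := by exact_mod_cast ht.ne'
        have h := Complex.cpow_add (x := (t:ℂ)) (s-1) 1 hne
        rw [show s - 1 + 1 = s from by ring, Complex.cpow_one] at h
        rw [h]; ring
      rw [setIntegral_congr_fun measurableSet_Ioi e1, integral_neg]
      have h3 := ibp_rel s z hs hz'
      rw [neg_inj, div_mul_eq_mul_div, eq_div_iff hzne]
      simp only [hFdef]
      linear_combination h3
    rw [h2] at h1
    have h4 : HasDerivAt (fun z : ℂ => z ^ s) (s * z ^ (s - 1)) z := by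
      have := (hasDerivAt_id z).cpow_const (c := s) (Or.inl hz')
      simpa [mul_comm] using this
    have h5 := h1.mul h4
    have hzs : z ^ s = z ^ (s - 1) * z := by
      have h := Complex.cpow_add (x := z) (s-1) 1 hzne
      rw [show s - 1 + 1 = s from by ring, Complex.cpow_one] at h
      exact h
    have key : -(s / z * F z) * z ^ s + F z * (s * z ^ (s - 1)) = 0 := by
      rw [hzs]; field_simp; ring
    have h6 : HasDerivAt (fun z => F z * z ^ s)
        (-(s / z * F z) * z ^ s + F z * (s * z ^ (s - 1))) z := h5
    rw [key] at h6
    exact h6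
  -- constancy on the convex set U
  have hconst : F w * w ^ s = F 1 * 1 ^ s := by
    have hcvx : Convex ℝ U := convex_halfSpace_re_gt 0
    have h0 := hcvx.norm_image_sub_le_of_norm_hasFDerivWithin_le
      (f' := fun _ => (0 : ℂ →L[ℝ] ℂ))
      (fun x hx => by
        have := ((hderiv x hx).hasFDerivAt.restrictScalars ℝ).hasFDerivWithinAt (s := U)
        convert this using 1
        ext v
        simp)
      (C := 0) (fun x _ => by simp) (by exact hw : w ∈ U) (by simp [hU] : (1:ℂ) ∈ U)
    rw [zero_mul] at h0
    have h1 := le_antisymm h0 (norm_nonneg _)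
    rw [norm_eq_zero, sub_eq_zero] at h1
    exact h1.symm
  have hF1 : F 1 = Complex.Gamma s := by
    rw [Complex.Gamma_eq_integral hs, Complex.GammaIntegral]
    apply setIntegral_congr_fun measurableSet_Ioi
    intro t _
    simp only [Complex.ofReal_exp, Complex.ofReal_neg, neg_mul, one_mul]
  rw [hF1, one_cpow, mul_one] at hconst
  have hwne : w ^ s ≠ 0 := by
    intro h
    rcases (Complex.cpow_eq_zero_iff _ _).mp h with ⟨h1, _⟩
    simp [h1] at hw
  rw [eq_div_iff hwne]
  exact hconst

lemma hasDerivAt_G (f f₁ : ℝ → ℂ) (w lam : ℂ) (α : ℝ)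
    (hlam : 0 < lam.re)
    (hlamαw : lam = (α : ℂ) * w)
    (hf : ContDiffOn ℝ 1 f (Set.Ici 0))
    (hf₁ : ∀ t : ℝ, 0 ≤ t → t ≠ α →
      f₁ t = t * deriv (fun s : ℝ => (f s - f α) / ((s : ℂ) - (α : ℂ))) t)
    (t : ℝ) (ht : 0 < t) (htα : t ≠ α) :
    HasDerivAt (fun t : ℝ => Complex.exp (-w * t) * (t : ℂ) ^ lam
        * ((f t - f α) / ((t : ℂ) - (α : ℂ))))
      (Complex.exp (-w * t) * (t : ℂ) ^ (lam - 1) * f₁ t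
        - w * (Complex.exp (-w * t) * (t : ℂ) ^ (lam - 1) * f t
          - f α * (Complex.exp (-w * t) * (t : ℂ) ^ (lam - 1)))) t := by
  have hlamne : lam ≠ 0 := fun h => by simp [h] at hlam
  set g : ℝ → ℂ := fun s : ℝ => (f s - f α) / ((s : ℂ) - (α : ℂ)) with hg
  have hden : (t : ℂ) - (α : ℂ) ≠ 0 := by
    intro h
    apply htα
    exact_mod_cast sub_eq_zero.mp h
  have hfd : DifferentiableAt ℝ f t :=
    ((hf.differentiableOn one_ne_zero) t (mem_Ici.mpr ht.le)).differentiableAt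
      (Ici_mem_nhds ht)
  have hgdiff : DifferentiableAt ℝ g t := by
    apply DifferentiableAt.div
    · exact (hfd.sub_const _)
    · exact (Complex.ofRealCLM.differentiable.differentiableAt).sub_const _
    · exact hden
  have hgd : HasDerivAt g (deriv g t) t := hgdiff.hasDerivAt
  have h1 := (hasDerivAt_u lam w hlamne ht).mul hgd
  refine h1.congr_deriv (Eq.symm ?_)
  have hsplit : (t : ℂ) ^ lam = (t : ℂ) ^ (lam - 1) * t := by
    have h := Complex.cpow_add (x := (t:ℂ)) (lam - 1) 1 (by exact_mod_cast ht.ne')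
    rw [show lam - 1 + 1 = lam from by ring, Complex.cpow_one] at h
    exact h
  have hfg : ((t : ℂ) - (α : ℂ)) * g t = f t - f α := by
    rw [hg]
    field_simp
  have hf₁t : f₁ t = t * deriv g t := hf₁ t ht.le htα
  rw [hf₁t, hsplit, hlamαw]
  obtain ⟨Gt, hGt⟩ : ∃ x, g t = x := ⟨_, rfl⟩
  obtain ⟨Dg, hDg⟩ : ∃ x, deriv g t = x := ⟨_, rfl⟩
  rw [hGt] at hfg
  rw [hGt, hDg]
  linear_combination (Complex.exp (-w * t) * (t : ℂ) ^ ((α : ℂ) * w - 1) * w) * hfg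

theorem stmt_17 (f f₁ : ℝ → ℂ) (w lam : ℂ) (α : ℝ)
    (hw : 0 < w.re) (hlam : 0 < lam.re) (hα : 0 < α)
    (hlamαw : lam = (α : ℂ) * w)
    (hf : ContDiffOn ℝ 1 f (Set.Ici 0))
    (hf₁cont : ContinuousOn f₁ (Set.Ici 0))
    (hf₁ : ∀ t : ℝ, 0 ≤ t → t ≠ α →
      f₁ t = t * deriv (fun s : ℝ => (f s - f α) / ((s : ℂ) - (α : ℂ))) t)
    (hint : IntegrableOn
      (fun t : ℝ => Complex.exp (-w * t) * (t : ℂ) ^ (lam - 1) * f t) (Set.Ioi 0))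
    (hint₁ : IntegrableOn
      (fun t : ℝ => Complex.exp (-w * t) * (t : ℂ) ^ (lam - 1) * f₁ t) (Set.Ioi 0))
    (hbd0 : Filter.Tendsto
      (fun t : ℝ => Complex.exp (-w * t) * (t : ℂ) ^ lam
        * ((f t - f α) / ((t : ℂ) - (α : ℂ))))
      (nhdsWithin 0 (Set.Ioi 0)) (nhds 0))
    (hbdTop : Filter.Tendsto
      (fun t : ℝ => Complex.exp (-w * t) * (t : ℂ) ^ lam
        * ((f t - f α) / ((t : ℂ) - (α : ℂ))))
      Filter.atTop (nhds 0)) :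
    ∫ t in Set.Ioi (0 : ℝ), Complex.exp (-w * t) * (t : ℂ) ^ (lam - 1) * f t
      = f α * Complex.Gamma lam / w ^ lam
        + (1 / w) * ∫ t in Set.Ioi (0 : ℝ),
            Complex.exp (-w * t) * (t : ℂ) ^ (lam - 1) * f₁ t := by
  have hwne : w ≠ 0 := fun h => by simp [h] at hw
  set G : ℝ → ℂ := fun t : ℝ => Complex.exp (-w * t) * (t : ℂ) ^ lam
    * ((f t - f α) / ((t : ℂ) - (α : ℂ))) with hGdef
  set D : ℝ → ℂ := fun t : ℝ =>
    Complex.exp (-w * t) * (t : ℂ) ^ (lam - 1) * f₁ t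
      - w * (Complex.exp (-w * t) * (t : ℂ) ^ (lam - 1) * f t
        - f α * (Complex.exp (-w * t) * (t : ℂ) ^ (lam - 1))) with hDdef
  -- integrability of D
  have hGam : IntegrableOn (fun t : ℝ => Complex.exp (-w * t) * (t : ℂ) ^ (lam - 1))
      (Ioi 0) := intOn_cexp_cpow lam w hlam hw
  have hD : IntegrableOn D (Ioi 0) :=
    hint₁.sub ((hint.sub (hGam.const_mul (f α))).const_mul w)
  -- the limit of G at α
  have hfd : HasDerivAt f (deriv f α) α :=
    (((hf.differentiableOn one_ne_zero) α (mem_Ici.mpr hα.le)).differentiableAt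
      (Ici_mem_nhds hα)).hasDerivAt
  set c : ℂ := deriv f α with hc
  set L : ℂ := Complex.exp (-w * α) * (α : ℂ) ^ lam * c with hL
  have hslope : ∀ t : ℝ, (f t - f α) / ((t : ℂ) - (α : ℂ)) = slope f α t := by
    intro t
    rw [slope_def_module]
    rw [show ((t:ℂ) - (α:ℂ)) = ((t - α : ℝ) : ℂ) by push_cast; ring]
    rw [div_eq_inv_mul, ← Complex.ofReal_inv, Complex.real_smul]
  have hgl : Tendsto (fun t : ℝ => (f t - f α) / ((t : ℂ) - (α : ℂ)))
      (nhdsWithin α {α}ᶜ) (nhds c) := by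
    have := hasDerivAt_iff_tendsto_slope.mp hfd
    refine this.congr' ?_
    filter_upwards with t
    rw [hslope]
  have hGl : Tendsto G (nhdsWithin α {α}ᶜ) (nhds L) := by
    have h1 : Tendsto (fun t : ℝ => Complex.exp (-w * t) * (t : ℂ) ^ lam)
        (nhds α) (nhds (Complex.exp (-w * α) * (α : ℂ) ^ lam)) := by
      apply Tendsto.mul
      · exact ((Complex.continuous_exp.comp (by continuity)).tendsto α)
      · exact (Complex.continuousAt_ofReal_cpow_const α lam (Or.inr hα.ne')).tendsto
    exact (h1.mono_left nhdsWithin_le_nhds).mul hgl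
  -- FTC on (0, α)
  have hderivG : ∀ t : ℝ, 0 < t → t ≠ α → HasDerivAt G (D t) t := fun t ht htα =>
    hasDerivAt_G f f₁ w lam α hlam hlamαw hf hf₁ t ht htα
  have hDIoc : IntegrableOn D (Ioc 0 α) := hD.mono_set Ioc_subset_Ioi_self
  have hI1 : ∫ t in (0:ℝ)..α, D t = L - 0 := by
    apply intervalIntegral.integral_eq_sub_of_hasDerivAt_of_tendsto hα
    · intro x hx
      exact hderivG x hx.1 (ne_of_lt hx.2)
    · rw [intervalIntegrable_iff_integrableOn_Ioc_of_le hα.le]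
      exact hDIoc
    · exact hbd0
    · exact hGl.mono_left (nhdsWithin_mono α (fun x hx => ne_of_lt hx))
  -- FTC on (α, ∞)
  set Gt : ℝ → ℂ := Function.update G α L with hGt
  have hGtG : ∀ x : ℝ, x ≠ α → Gt x = G x := fun x hx => Function.update_of_ne hx _ _
  have hI2 : ∫ t in Ioi α, D t = 0 - L := by
    have hGtα : Gt α = L := by rw [hGt]; exact Function.update_self _ _ _
    have hcont : ContinuousWithinAt Gt (Ici α) α := by
      rw [ContinuousWithinAt, hGtα]
      rw [show Ici α = {α} ∪ Ioi α by
        ext x; simp [mem_Ici, mem_Ioi, le_iff_lt_or_eq, or_comm, eq_comm]]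
      rw [nhdsWithin_union, nhdsWithin_singleton]
      rw [Filter.tendsto_sup]
      constructor
      · have := tendsto_pure_nhds Gt α
        rwa [hGtα] at this
      · refine (hGl.mono_left (nhdsWithin_mono α (fun x hx => ne_of_gt hx))).congr' ?_
        filter_upwards [self_mem_nhdsWithin] with x (hx : α < x)
        exact (hGtG x (ne_of_gt hx)).symm
    have hderiv : ∀ x ∈ Ioi α, HasDerivAt Gt (D x) x := by
      intro x hx
      rw [mem_Ioi] at hx
      refine (hderivG x (hα.trans hx) (ne_of_gt hx)).congr_of_eventuallyEq ?_
      filter_upwards [isOpen_ne.mem_nhds (ne_of_gt hx)] with y hy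
      exact hGtG y hy
    have htop : Tendsto Gt atTop (nhds 0) := by
      refine hbdTop.congr' ?_
      filter_upwards [eventually_gt_atTop α] with x hx
      exact (hGtG x (ne_of_gt hx)).symm
    have := integral_Ioi_of_hasDerivAt_of_tendsto hcont hderiv
      (hD.mono_set (Ioi_subset_Ioi hα.le)) htop
    rw [this, hGtα]
  -- combine
  have hDIoi : IntegrableOn D (Ioi α) := hD.mono_set (Ioi_subset_Ioi hα.le)
  have hsum : ∫ t in Ioi (0:ℝ), D t = 0 := by
    rw [← Ioc_union_Ioi_eq_Ioi hα.le,
      setIntegral_union (Ioc_disjoint_Ioi le_rfl) measurableSet_Ioi hDIoc hDIoi]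
    rw [← intervalIntegral.integral_of_le hα.le, hI1, hI2]
    ring
  -- expand linearity
  have hwB : IntegrableOn (fun t : ℝ =>
      w * (Complex.exp (-w * t) * (t : ℂ) ^ (lam - 1) * f t
        - f α * (Complex.exp (-w * t) * (t : ℂ) ^ (lam - 1)))) (Ioi 0) :=
    (hint.sub (hGam.const_mul (f α))).const_mul w
  have eA : (∫ t in Ioi (0:ℝ), D t)
      = (∫ t in Ioi (0:ℝ), Complex.exp (-w * t) * (t : ℂ) ^ (lam - 1) * f₁ t)
        - ∫ t in Ioi (0:ℝ), w * (Complex.exp (-w * t) * (t : ℂ) ^ (lam - 1) * f t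
            - f α * (Complex.exp (-w * t) * (t : ℂ) ^ (lam - 1))) :=
    integral_sub hint₁ hwB
  have eB : (∫ t in Ioi (0:ℝ), w * (Complex.exp (-w * t) * (t : ℂ) ^ (lam - 1) * f t
        - f α * (Complex.exp (-w * t) * (t : ℂ) ^ (lam - 1))))
      = w * ∫ t in Ioi (0:ℝ), (Complex.exp (-w * t) * (t : ℂ) ^ (lam - 1) * f t
          - f α * (Complex.exp (-w * t) * (t : ℂ) ^ (lam - 1))) :=
    integral_const_mul _ _
  have eC : (∫ t in Ioi (0:ℝ), (Complex.exp (-w * t) * (t : ℂ) ^ (lam - 1) * f t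
        - f α * (Complex.exp (-w * t) * (t : ℂ) ^ (lam - 1))))
      = (∫ t in Ioi (0:ℝ), Complex.exp (-w * t) * (t : ℂ) ^ (lam - 1) * f t)
        - ∫ t in Ioi (0:ℝ), f α * (Complex.exp (-w * t) * (t : ℂ) ^ (lam - 1)) :=
    integral_sub hint (hGam.const_mul (f α))
  have eD : (∫ t in Ioi (0:ℝ), f α * (Complex.exp (-w * t) * (t : ℂ) ^ (lam - 1)))
      = f α * ∫ t in Ioi (0:ℝ), Complex.exp (-w * t) * (t : ℂ) ^ (lam - 1) :=
    integral_const_mul _ _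
  have hkey : (0:ℂ)
      = (∫ t in Ioi (0:ℝ), Complex.exp (-w * t) * (t : ℂ) ^ (lam - 1) * f₁ t)
        - w * ((∫ t in Ioi (0:ℝ), Complex.exp (-w * t) * (t : ℂ) ^ (lam - 1) * f t)
          - f α * (Complex.Gamma lam / w ^ lam)) := by
    rw [← hsum, eA, eB, eC, eD, gammaIntegral_cexp lam w hlam hw]
  have hwlam : w ^ lam ≠ 0 := by
    intro h
    rcases (Complex.cpow_eq_zero_iff _ _).mp h with ⟨h1, _⟩
    simp [h1] at hw
  field_simp at hkey ⊢
  linear_combination hkey
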